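/- Let L = (S, Act, →) be a labelled transition system, σ a path in L, and φ an ACTL* formula. Then the mapping ks preserves truth: L,σ ⊨ φ if and only if ks(L), ks(σ) ⊨ ks(φ). -/

import Mathlib

/-!
Statement 0: the mapping `ks` from ACTL* (over labelled transition systems) to
CTL* (over Kripke structures) preserves truth:
`L,σ ⊨ φ` iff `ks(L), ks(σ) ⊨ ks(φ)`.
-/

namespace Stmt0

/-- A path in a labelled transition system with transition relation `Tr ⊆ S × Act × S`. -/
structure LPath {S Act : Type} (Tr : S → Act → S → Prop) where
  states : ℕ → S
  acts : ℕ → Act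
  valid : ∀ n, Tr (states n) (acts n) (states (n + 1))

/-- The suffix of a path, starting at position `k`. -/
def LPath.suffix {S Act : Type} {Tr : S → Act → S → Prop} (σ : LPath Tr) (k : ℕ) :
    LPath Tr where
  states n := σ.states (n + k)
  acts n := σ.acts (n + k)
  valid n := by
    have h := σ.valid (n + k)
    rwa [show n + k + 1 = n + 1 + k by omega] at h

/-- A path in a Kripke structure with transition relation `R ⊆ S × S`. -/
structure KPath {S : Type} (R : S → S → Prop) where
  states : ℕ → S
  valid : ∀ n, R (states n) (states (n + 1))

/-- The suffix of a path in a Kripke structure, starting at position `k`. -/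
def KPath.suffix {S : Type} {R : S → S → Prop} (σ : KPath R) (k : ℕ) : KPath R where
  states n := σ.states (n + k)
  valid n := by
    have h := σ.valid (n + k)
    rwa [show n + k + 1 = n + 1 + k by omega] at h

mutual
/-- ACTL* state formulas over actions `Act`:
`φ ::= true | ¬φ | φ∧φ' | ∃π`. -/
inductive ASF (Act : Type) : Type
  | tt : ASF Act
  | neg : ASF Act → ASF Act
  | and : ASF Act → ASF Act → ASF Act
  | ex : APF Act → ASF Act

/-- ACTL* path formulas over actions `Act`:
`π ::= φ | ¬π | π∧π' | Xπ | X_a π | π U π'`. -/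
inductive APF (Act : Type) : Type
  | state : ASF Act → APF Act
  | neg : APF Act → APF Act
  | and : APF Act → APF Act → APF Act
  | next : APF Act → APF Act
  | anext : Act → APF Act → APF Act
  | unt : APF Act → APF Act → APF Act
end

mutual
/-- Satisfaction of ACTL* state formulas at a state of an LTS. -/
def asatS {S Act : Type} (Tr : S → Act → S → Prop) : ASF Act → S → Prop
  | .tt, _ => True
  | .neg φ, s => ¬ asatS Tr φ s
  | .and φ ψ, s => asatS Tr φ s ∧ asatS Tr ψ s
  | .ex π, s => ∃ σ : LPath Tr, σ.states 0 = s ∧ asatP Tr π σ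

/-- Satisfaction of ACTL* path formulas on a path of an LTS. -/
def asatP {S Act : Type} (Tr : S → Act → S → Prop) : APF Act → LPath Tr → Prop
  | .state φ, σ => asatS Tr φ (σ.states 0)
  | .neg π, σ => ¬ asatP Tr π σ
  | .and π π', σ => asatP Tr π σ ∧ asatP Tr π' σ
  | .next π, σ => asatP Tr π (σ.suffix 1)
  | .anext a π, σ => σ.acts 0 = a ∧ asatP Tr π (σ.suffix 1)
  | .unt π π', σ => ∃ j, asatP Tr π' (σ.suffix j) ∧ ∀ i < j, asatP Tr π (σ.suffix i)
end

mutual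
/-- CTL* state formulas over atomic propositions `AP`:
`φ ::= true | p | ¬φ | φ∧φ' | ∃π`. -/
inductive CSF (AP : Type) : Type
  | tt : CSF AP
  | atom : AP → CSF AP
  | neg : CSF AP → CSF AP
  | and : CSF AP → CSF AP → CSF AP
  | ex : CPF AP → CSF AP

/-- CTL* path formulas over atomic propositions `AP`:
`π ::= φ | ¬π | π∧π' | Xπ | π U π'`. -/
inductive CPF (AP : Type) : Type
  | state : CSF AP → CPF AP
  | neg : CPF AP → CPF AP
  | and : CPF AP → CPF AP → CPF AP
  | next : CPF AP → CPF AP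
  | unt : CPF AP → CPF AP → CPF AP
end

mutual
/-- Satisfaction of CTL* state formulas at a state of a Kripke structure. -/
def csatS {S AP : Type} (R : S → S → Prop) (Lab : S → Set AP) : CSF AP → S → Prop
  | .tt, _ => True
  | .atom p, s => p ∈ Lab s
  | .neg φ, s => ¬ csatS R Lab φ s
  | .and φ ψ, s => csatS R Lab φ s ∧ csatS R Lab ψ s
  | .ex π, s => ∃ σ : KPath R, σ.states 0 = s ∧ csatP R Lab π σ

/-- Satisfaction of CTL* path formulas on a path of a Kripke structure. -/
def csatP {S AP : Type} (R : S → S → Prop) (Lab : S → Set AP) : CPF AP → KPath R → Prop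
  | .state φ, σ => csatS R Lab φ (σ.states 0)
  | .neg π, σ => ¬ csatP R Lab π σ
  | .and π π', σ => csatP R Lab π σ ∧ csatP R Lab π' σ
  | .next π, σ => csatP R Lab π (σ.suffix 1)
  | .unt π π', σ => ∃ j, csatP R Lab π' (σ.suffix j) ∧ ∀ i < j, csatP R Lab π (σ.suffix i)
end

section ksConstruction

variable {S Act : Type} (Tr : S → Act → S → Prop)

/-- States of the Kripke structure `ks(L)`: the states of `L` together with one fresh
state for each transition of `L`. -/
abbrev KState := S ⊕ {t : S × Act × S // Tr t.1 t.2.1 t.2.2}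

/-- The fresh atomic proposition `F` (the atomic propositions of `ks(L)` are `Act ∪ {F}`). -/
def Fprop : Act ⊕ Unit := Sum.inr ()

/-- Transitions of `ks(L)`: for every transition `(s₀, α, s₁)` of `L`, the new state
`(s₀, α, s₁)` sits between `s₀` and `s₁`. -/
def KTrans : KState Tr → KState Tr → Prop
  | .inl s, .inr t => t.1.1 = s
  | .inr t, .inl s => t.1.2.2 = s
  | _, _ => False

/-- Labelling of `ks(L)`: original states are labelled `{F}`, the state corresponding to a
transition `(s₀, α, s₁)` is labelled `{α}`. -/
def KLab : KState Tr → Set (Act ⊕ Unit)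
  | .inl _ => {Sum.inr ()}
  | .inr t => {Sum.inl t.1.2.1}

/-- The path `ks(σ)` in `ks(L)` induced by a path `σ` in `L`: between consecutive states of
`σ` the corresponding transition-state is inserted. -/
def ksPath (σ : LPath Tr) : KPath (KTrans Tr) where
  states n :=
    if n % 2 = 0 then Sum.inl (σ.states (n / 2))
    else Sum.inr ⟨(σ.states (n / 2), σ.acts (n / 2), σ.states (n / 2 + 1)), σ.valid (n / 2)⟩
  valid n := by
    rcases Nat.even_or_odd n with ⟨k, hk⟩ | ⟨k, hk⟩
    · have h1 : n % 2 = 0 := by omega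
      have h2 : ¬ (n + 1) % 2 = 0 := by omega
      have h3 : (n + 1) / 2 = n / 2 := by omega
      simp only [h1, h2, if_true, if_false, h3, KTrans]
    · have h1 : ¬ n % 2 = 0 := by omega
      have h2 : (n + 1) % 2 = 0 := by omega
      have h3 : (n + 1) / 2 = n / 2 + 1 := by omega
      simp only [h1, h2, if_true, if_false, h3, KTrans]

end ksConstruction

/-- The atomic proposition `F`, as a CTL* path formula. -/
def Fpf (Act : Type) : CPF (Act ⊕ Unit) := .state (.atom (Sum.inr ()))

mutual
/-- The translation `ks` from ACTL* state formulas to CTL* state formulas. -/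
def ksS {Act : Type} : ASF Act → CSF (Act ⊕ Unit)
  | .tt => .tt
  | .neg φ => .neg (ksS φ)
  | .and φ ψ => .and (ksS φ) (ksS ψ)
  | .ex π => .ex (ksP π)

/-- The translation `ks` from ACTL* path formulas to CTL* path formulas.
(Implication `F ⇒ ψ` is expressed as `¬(F ∧ ¬ψ)`.) -/
def ksP {Act : Type} : APF Act → CPF (Act ⊕ Unit)
  | .state φ => .state (ksS φ)
  | .neg π => .neg (ksP π)
  | .and π π' => .and (ksP π) (ksP π')
  | .next π => .next (.next (ksP π))
  | .anext a π => .and (.next (.state (.atom (Sum.inl a)))) (.next (.next (ksP π)))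
  | .unt π π' =>
      .unt (.neg (.and (Fpf Act) (.neg (ksP π)))) (.and (Fpf Act) (ksP π'))
end


section Aux

variable {S Act : Type} {Tr : S → Act → S → Prop}

theorem KPath.ext' {S : Type} {R : S → S → Prop} {τ τ' : KPath R}
    (h : ∀ n, τ.states n = τ'.states n) : τ = τ' := by
  cases τ; cases τ'
  have : _ = _ := funext h
  simp only at this
  subst this
  rfl

theorem ksPath_states_even (σ : LPath Tr) (k : ℕ) :
    (ksPath Tr σ).states (2 * k) = Sum.inl (σ.states k) := by
  have h1 : 2 * k % 2 = 0 := by omega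
  have h2 : 2 * k / 2 = k := by omega
  simp [ksPath, h1, h2]

theorem ksPath_states_odd (σ : LPath Tr) (k : ℕ) :
    (ksPath Tr σ).states (2 * k + 1) =
      Sum.inr ⟨(σ.states k, σ.acts k, σ.states (k + 1)), σ.valid k⟩ := by
  have h1 : ¬ (2 * k + 1) % 2 = 0 := by omega
  have h2 : (2 * k + 1) / 2 = k := by omega
  simp [ksPath, h1, h2]

theorem ksPath_suffix (σ : LPath Tr) (k : ℕ) :
    (ksPath Tr σ).suffix (2 * k) = ksPath Tr (σ.suffix k) := by
  apply KPath.ext'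
  intro n
  have e1 : (n + 2 * k) % 2 = n % 2 := by omega
  have e2 : (n + 2 * k) / 2 = n / 2 + k := by omega
  simp only [KPath.suffix, ksPath, LPath.suffix, e1, e2]
  by_cases h : n % 2 = 0
  · simp [h]
  · simp only [h, if_false]
    congr 1
    apply Subtype.ext
    show (σ.states (n / 2 + k), σ.acts (n / 2 + k), σ.states (n / 2 + k + 1)) =
      (σ.states (n / 2 + k), σ.acts (n / 2 + k), σ.states (n / 2 + 1 + k))
    rw [show n / 2 + k + 1 = n / 2 + 1 + k from by omega]

theorem suffix_one_one {R : S → S → Prop} (τ : KPath R) :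
    (τ.suffix 1).suffix 1 = τ.suffix 2 := by
  apply KPath.ext'
  intro n
  rfl

/-- Every path of `ks(L)` starting in an original state is induced by a path of `L`. -/
theorem exists_lpath (τ : KPath (KTrans Tr)) (s : S) (h0 : τ.states 0 = Sum.inl s) :
    ∃ σ : LPath Tr, ksPath Tr σ = τ ∧ σ.states 0 = s := by
  classical
  -- every even position is an original state
  have A : ∀ n, ∃ s', τ.states (2 * n) = Sum.inl s' := by
    intro n
    induction n with
    | zero => exact ⟨s, h0⟩
    | succ m ih =>
      obtain ⟨s', hs'⟩ := ih
      have v1 := τ.valid (2 * m)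
      rw [hs'] at v1
      cases h1 : τ.states (2 * m + 1) with
      | inl x => rw [h1] at v1; exact absurd v1 (by simp [KTrans])
      | inr t =>
        rw [h1] at v1
        have v2 := τ.valid (2 * m + 1)
        rw [h1] at v2
        cases h2 : τ.states (2 * m + 2) with
        | inl y =>
          refine ⟨y, ?_⟩
          have : 2 * (m + 1) = 2 * m + 2 := by omega
          rfl
        | inr t' => rw [h2] at v2; exact absurd v2 (by simp [KTrans])
  have B : ∀ n, ∃ t : {t : S × Act × S // Tr t.1 t.2.1 t.2.2},
      τ.states (2 * n + 1) = Sum.inr t := by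
    intro n
    obtain ⟨s', hs'⟩ := A n
    have v1 := τ.valid (2 * n)
    rw [hs'] at v1
    cases h1 : τ.states (2 * n + 1) with
    | inl x => rw [h1] at v1; exact absurd v1 (by simp [KTrans])
    | inr t => exact ⟨t, rfl⟩
  choose f hf using A
  choose g hg using B
  have hfg1 : ∀ n, (g n).1.1 = f n := by
    intro n
    have v1 := τ.valid (2 * n)
    rw [hf n, hg n] at v1
    simpa [KTrans] using v1
  have hfg2 : ∀ n, (g n).1.2.2 = f (n + 1) := by
    intro n
    have v2 := τ.valid (2 * n + 1)
    have h2 : 2 * n + 1 + 1 = 2 * (n + 1) := by omega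
    rw [hg n, h2, hf (n + 1)] at v2
    simpa [KTrans] using v2
  refine ⟨⟨f, fun n => (g n).1.2.1, ?_⟩, ?_, ?_⟩
  · intro n
    have := (g n).2
    rwa [hfg1 n, hfg2 n] at this
  · apply KPath.ext'
    intro n
    rcases Nat.even_or_odd n with ⟨m, hm⟩ | ⟨m, hm⟩
    · have hn : n = 2 * m := by omega
      subst hn
      rw [ksPath_states_even, hf m]
    · have hn : n = 2 * m + 1 := by omega
      subst hn
      rw [ksPath_states_odd, hg m]
      congr 1
      apply Subtype.ext
      show ((f m : S), _, f (m + 1)) = (g m).1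
      rw [← hfg1 m, ← hfg2 m]
  · have h00 := hf 0
    rw [Nat.mul_zero, h0] at h00
    exact (Sum.inl_injective h00).symm

mutual

theorem satS_iff {S Act : Type} (Tr : S → Act → S → Prop) (φ : ASF Act) (s : S) :
    asatS Tr φ s ↔ csatS (KTrans Tr) (KLab Tr) (ksS φ) (Sum.inl s) := by
  cases φ with
  | tt => simp [asatS, ksS, csatS]
  | neg φ => simp only [asatS, ksS, csatS]; rw [satS_iff Tr φ s]
  | and φ ψ => simp only [asatS, ksS, csatS]; rw [satS_iff Tr φ s, satS_iff Tr ψ s]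
  | ex π =>
    simp only [asatS, ksS, csatS]
    constructor
    · rintro ⟨σ, hσ0, hσ⟩
      refine ⟨ksPath Tr σ, ?_, ?_⟩
      · have := ksPath_states_even σ 0
        simpa [hσ0] using this
      · exact (satP_iff Tr π σ).mp hσ
    · rintro ⟨τ, hτ0, hτ⟩
      obtain ⟨σ, hks, hσ0⟩ := exists_lpath τ s hτ0
      exact ⟨σ, hσ0, (satP_iff Tr π σ).mpr (by rw [hks]; exact hτ)⟩

theorem satP_iff {S Act : Type} (Tr : S → Act → S → Prop) (π : APF Act) (σ : LPath Tr) :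
    asatP Tr π σ ↔ csatP (KTrans Tr) (KLab Tr) (ksP π) (ksPath Tr σ) := by
  cases π with
  | state φ =>
    simp only [asatP, ksP, csatP]
    have h0 : (ksPath Tr σ).states 0 = Sum.inl (σ.states 0) := by
      simpa using ksPath_states_even σ 0
    rw [h0]
    exact satS_iff Tr φ (σ.states 0)
  | neg π => simp only [asatP, ksP, csatP]; rw [satP_iff Tr π σ]
  | and π π' => simp only [asatP, ksP, csatP]; rw [satP_iff Tr π σ, satP_iff Tr π' σ]
  | next π =>
    simp only [asatP, ksP, csatP]
    rw [suffix_one_one, show (2 : ℕ) = 2 * 1 by rfl, ksPath_suffix]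
    exact satP_iff Tr π (σ.suffix 1)
  | anext a π =>
    simp only [asatP, ksP, csatP]
    have h1 : ((ksPath Tr σ).suffix 1).states 0 =
        Sum.inr ⟨(σ.states 0, σ.acts 0, σ.states 1), σ.valid 0⟩ := by
      simpa [KPath.suffix] using ksPath_states_odd σ 0
    rw [h1, suffix_one_one, show (2 : ℕ) = 2 * 1 by rfl, ksPath_suffix]
    rw [satP_iff Tr π (σ.suffix 1)]
    simp [csatS, KLab, eq_comm]
  | unt π π' =>
    simp only [asatP, ksP, csatP]
    have hs0 : ∀ m, ((ksPath Tr σ).suffix m).states 0 = (ksPath Tr σ).states m := by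
      intro m; simp [KPath.suffix]
    have hF_even : ∀ k, csatS (KTrans Tr) (KLab Tr) (CSF.atom (Sum.inr ()))
        (((ksPath Tr σ).suffix (2 * k)).states 0) := by
      intro k; rw [hs0, ksPath_states_even]; simp [csatS, KLab]
    have hF_odd : ∀ k, ¬ csatS (KTrans Tr) (KLab Tr) (CSF.atom (Sum.inr ()))
        (((ksPath Tr σ).suffix (2 * k + 1)).states 0) := by
      intro k; rw [hs0, ksPath_states_odd]; simp [csatS, KLab]
    constructor
    · rintro ⟨j, hj, hlt⟩
      refine ⟨2 * j, ⟨hF_even j, ?_⟩, ?_⟩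
      · rw [ksPath_suffix]
        exact (satP_iff Tr π' (σ.suffix j)).mp hj
      · intro i hi
        rcases Nat.even_or_odd i with ⟨m, hm⟩ | ⟨m, hm⟩
        · have hi' : i = 2 * m := by omega
          subst hi'
          rintro ⟨_, hbad⟩
          rw [ksPath_suffix] at hbad
          exact hbad ((satP_iff Tr π (σ.suffix m)).mp (hlt m (by omega)))
        · have hi' : i = 2 * m + 1 := by omega
          subst hi'
          rintro ⟨hbad, _⟩
          exact hF_odd m hbad
    · rintro ⟨j, ⟨hjF, hj⟩, hlt⟩
      rcases Nat.even_or_odd j with ⟨k, hk⟩ | ⟨k, hk⟩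
      · have hj' : j = 2 * k := by omega
        subst hj'
        rw [ksPath_suffix] at hj
        refine ⟨k, (satP_iff Tr π' (σ.suffix k)).mpr hj, ?_⟩
        intro m hm
        have h := hlt (2 * m) (by omega)
        rw [not_and, not_not] at h
        have h2 := h (hF_even m)
        rw [ksPath_suffix] at h2
        exact (satP_iff Tr π (σ.suffix m)).mpr h2
      · have hj' : j = 2 * k + 1 := by omega
        subst hj'
        exact absurd hjF (hF_odd k)

end

end Aux

/-- Let `L` be an LTS, `σ` a path in `L`, and `φ` an ACTL* formula.
Then `ks` preserves truth: `L,σ ⊨ φ` iff `ks(L), ks(σ) ⊨ ks(φ)`. -/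
theorem ks_preserves_truth {S Act : Type} (Tr : S → Act → S → Prop)
    (σ : LPath Tr) (φ : APF Act) :
    asatP Tr φ σ ↔ csatP (KTrans Tr) (KLab Tr) (ksP φ) (ksPath Tr σ) :=
  satP_iff Tr φ σ

end Stmt0
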